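/- Let G be a finitely generated group with word metric, let gP and fQ be left cosets of subgroups P and Q of G. Then for any k > 0 there exists M > 0 such that the intersection of the closed k-neighborhoods N_k(gP) ∩ N_k(fQ) is contained in the closed M-neighborhood N_M(gPg⁻¹ ∩ fQf⁻¹). -/

import Mathlib

open scoped Pointwise

variable {G : Type*} [Group G]

/-- Word distance between `g` and `h` with respect to a generating set `S` (values in `ℕ∞`). -/
noncomputable def wordDist (S : Set G) (g h : G) : ℕ∞ :=
  sInf {n : ℕ∞ | ∃ l : List G, (∀ x ∈ l, x ∈ S ∨ x⁻¹ ∈ S) ∧ l.prod = g⁻¹ * h ∧ (l.length : ℕ∞) = n}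

/-- Closed `r`-neighbourhood of a subset of `G` in the word metric. -/
def nbhd (S : Set G) (r : ℕ∞) (A : Set G) : Set G := {g | ∃ a ∈ A, wordDist S g a ≤ r}

/-- Hausdorff distance between subsets of `G` in the word metric. -/
noncomputable def hdist (S : Set G) (A B : Set G) : ℕ∞ :=
  sInf {r : ℕ∞ | A ⊆ nbhd S r B ∧ B ⊆ nbhd S r A}

/-- The conjugate subgroup `g P g⁻¹`. -/
def conjSub (g : G) (P : Subgroup G) : Subgroup G := ConjAct.toConjAct g • P

/-- The collection of all left cosets `gP`, `g ∈ G`, `P ∈ Ps`, as subsets of `G`. -/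
def cosetsOf (Ps : Set (Subgroup G)) : Set (Set G) :=
  {A | ∃ (g : G) (P : Subgroup G), P ∈ Ps ∧ A = g • (P : Set G)}

/-- A collection of subgroups is almost malnormal if any conjugate of a member meets any
member in a finite subgroup, except for the trivial configurations. -/
def AlmostMalnormal (Ps : Set (Subgroup G)) : Prop :=
  ∀ P ∈ Ps, ∀ P' ∈ Ps, ∀ g : G,
    ((conjSub g P ⊓ P' : Subgroup G) : Set G).Finite ∨ (P = P' ∧ g ∈ P)

/-- A collection of subgroups is reduced if commensurability of a member with a conjugate of a
member only happens trivially. -/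
def Reduced (Ps : Set (Subgroup G)) : Prop :=
  ∀ P ∈ Ps, ∀ Q ∈ Ps, ∀ g : G, Subgroup.Commensurable P (conjSub g Q) → P = Q ∧ g ∈ P

/-- Every element of a group generated by `S` is a product of a list over `S ∪ S⁻¹`. -/
lemma exists_word (S : Set G) (hgen : Subgroup.closure S = ⊤) (z : G) :
    ∃ l : List G, (∀ x ∈ l, x ∈ S ∨ x⁻¹ ∈ S) ∧ l.prod = z := by
  have hz : z ∈ Subgroup.closure S := hgen ▸ Subgroup.mem_top z
  have hz' : z ∈ Submonoid.closure (S ∪ S⁻¹) := by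
    rw [← Subgroup.closure_toSubmonoid]; exact hz
  obtain ⟨l, hl, hprod⟩ := Submonoid.exists_list_of_mem_closure hz'
  exact ⟨l, fun x hx => by simpa [Set.mem_inv] using hl x hx, hprod⟩

lemma wordDist_le (S : Set G) {x y : G} {l : List G}
    (h1 : ∀ a ∈ l, a ∈ S ∨ a⁻¹ ∈ S) (h2 : l.prod = x⁻¹ * y) {M : ℕ} (hM : l.length ≤ M) :
    wordDist S x y ≤ M := by
  refine le_trans (sInf_le ⟨l, h1, h2, rfl⟩) ?_
  exact_mod_cast Nat.cast_le.2 hM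

/-- If `wordDist S x y ≤ k` then there is a witnessing word of length `≤ k`. -/
lemma exists_word_of_wordDist_le (S : Set G) {x y : G} {k : ℕ}
    (h : wordDist S x y ≤ (k : ℕ∞)) :
    ∃ l : List G, (∀ a ∈ l, a ∈ S ∨ a⁻¹ ∈ S) ∧ l.prod = x⁻¹ * y ∧ l.length ≤ k := by
  set T := {n : ℕ∞ | ∃ l : List G, (∀ x ∈ l, x ∈ S ∨ x⁻¹ ∈ S) ∧ l.prod = x⁻¹ * y ∧ (l.length : ℕ∞) = n} with hT
  have hne : T.Nonempty := by
    by_contra hemp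
    rw [Set.not_nonempty_iff_eq_empty] at hemp
    have htop : wordDist S x y = ⊤ := by rw [wordDist, ← hT, hemp, sInf_empty]
    rw [htop, top_le_iff] at h
    exact (ENat.coe_ne_top k) h
  obtain ⟨l, hl1, hl2, hl3⟩ := csInf_mem hne
  refine ⟨l, hl1, hl2, ?_⟩
  have h4 : (l.length : ℕ∞) ≤ (k : ℕ∞) := by
    rw [hl3]
    exact le_trans (le_of_eq rfl) (le_trans (le_refl _) h)
  exact_mod_cast h4

omit [Group G] in
lemma finite_words (T : Set G) (hT : T.Finite) :
    ∀ k : ℕ, {l : List G | (∀ x ∈ l, x ∈ T) ∧ l.length ≤ k}.Finite := by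
  intro k
  induction k with
  | zero =>
    apply Set.Finite.subset (Set.finite_singleton ([] : List G))
    rintro l ⟨-, hlen⟩
    simp_all [List.length_eq_zero_iff.1 (Nat.le_zero.1 hlen)]
  | succ n ih =>
    apply Set.Finite.subset
      (Set.Finite.insert ([] : List G)
        (Set.Finite.image2 List.cons hT ih))
    rintro l ⟨hmem, hlen⟩
    cases l with
    | nil => exact Set.mem_insert _ _
    | cons a t =>
      refine Set.mem_insert_of_mem _ (Set.mem_image2_of_mem (hmem a (by simp)) ?_)
      exact ⟨fun x hx => hmem x (by simp [hx]), by simpa using hlen⟩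

lemma mem_conjSub {g : G} {P : Subgroup G} {p : G} (hp : p ∈ P) :
    g * p * g⁻¹ ∈ conjSub g P := by
  rw [conjSub, Subgroup.mem_smul_pointwise_iff_exists]
  exact ⟨p, hp, by simp [ConjAct.toConjAct_smul]⟩

/-- Intersections of neighbourhoods of cosets are contained in a neighbourhood
of the intersection of the corresponding conjugates. -/
theorem nbhd_coset_inter_subset (S : Set G) (hS : S.Finite)
    (hgen : Subgroup.closure S = ⊤) (P Q : Subgroup G) (g f : G) :
    ∀ k : ℕ, 0 < k → ∃ M : ℕ, 0 < M ∧
      nbhd S k (g • (P : Set G)) ∩ nbhd S k (f • (Q : Set G)) ⊆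
        nbhd S M ((conjSub g P ⊓ conjSub f Q : Subgroup G) : Set G) := by
  classical
  intro k hk
  -- the ball of radius `k` around the identity
  set B : Set G := {a : G | ∃ l : List G, (∀ x ∈ l, x ∈ S ∨ x⁻¹ ∈ S) ∧ l.prod = a ∧ l.length ≤ k}
    with hBdef
  have hB : B.Finite := by
    have hT : (S ∪ S⁻¹).Finite := hS.union hS.inv
    apply Set.Finite.subset ((finite_words _ hT k).image List.prod)
    rintro a ⟨l, h1, h2, h3⟩
    exact ⟨l, ⟨fun x hx => by
      rcases h1 x hx with h | h
      · exact Set.mem_union_left _ h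
      · exact Set.mem_union_right _ (by simpa [Set.mem_inv] using h), h3⟩, h2⟩
  -- for each pair `(a, b)` choose a basepoint of `X a b` and a word bound
  set X : G → G → Set G :=
    fun a b => {x : G | x * a ∈ g • (P : Set G) ∧ x * b ∈ f • (Q : Set G)} with hXdef
  have key : ∀ p : G × G, ∃ m : ℕ, (X p.1 p.2).Nonempty →
      ∃ x₀ ∈ X p.1 p.2, ∃ l : List G,
        (∀ x ∈ l, x ∈ S ∨ x⁻¹ ∈ S) ∧ l.prod = x₀⁻¹ ∧ l.length ≤ m := by
    intro p
    by_cases hne : (X p.1 p.2).Nonempty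
    · obtain ⟨x₀, hx₀⟩ := hne
      obtain ⟨l, hl1, hl2⟩ := exists_word S hgen x₀⁻¹
      exact ⟨l.length, fun _ => ⟨x₀, hx₀, l, hl1, hl2, le_refl _⟩⟩
    · exact ⟨0, fun h => absurd h hne⟩
  choose m hm using key
  -- a uniform bound
  obtain ⟨M₀, hM₀⟩ := Set.Finite.bddAbove ((hB.prod hB).image m)
  refine ⟨M₀ + 1, Nat.succ_pos _, ?_⟩
  rintro x ⟨⟨y, hy, hdy⟩, ⟨z, hz, hdz⟩⟩
  obtain ⟨la, ha1, ha2, ha3⟩ := exists_word_of_wordDist_le S hdy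
  obtain ⟨lb, hb1, hb2, hb3⟩ := exists_word_of_wordDist_le S hdz
  set a : G := x⁻¹ * y with hadef
  set b : G := x⁻¹ * z with hbdef
  have haB : a ∈ B := ⟨la, ha1, ha2, ha3⟩
  have hbB : b ∈ B := ⟨lb, hb1, hb2, hb3⟩
  have hxX : x ∈ X a b := by
    constructor
    · simpa [hadef, mul_assoc] using hy
    · simpa [hbdef, mul_assoc] using hz
  obtain ⟨x₀, hx₀, l, hl1, hl2, hl3⟩ := hm (a, b) ⟨x, hxX⟩
  -- `x * x₀⁻¹` lies in the intersection of the conjugates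
  obtain ⟨p, hp, hgp⟩ := hxX.1
  simp only [smul_eq_mul] at *
  obtain ⟨p₀, hp₀, hgp₀⟩ := hx₀.1
  obtain ⟨q, hq, hfq⟩ := hxX.2
  obtain ⟨q₀, hq₀, hfq₀⟩ := hx₀.2
  have hPmem : x * x₀⁻¹ ∈ conjSub g P := by
    have : x * x₀⁻¹ = g * (p * p₀⁻¹) * g⁻¹ := by
      have e1 : x = g * p * a⁻¹ := by
        rw [eq_mul_inv_iff_mul_eq]; exact hgp.symm
      have e2 : x₀ = g * p₀ * a⁻¹ := by
        rw [eq_mul_inv_iff_mul_eq]; exact hgp₀.symm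
      rw [e1, e2]; group
    rw [this]
    exact mem_conjSub (mul_mem hp (inv_mem hp₀))
  have hQmem : x * x₀⁻¹ ∈ conjSub f Q := by
    have : x * x₀⁻¹ = f * (q * q₀⁻¹) * f⁻¹ := by
      have e1 : x = f * q * b⁻¹ := by
        rw [eq_mul_inv_iff_mul_eq]; exact hfq.symm
      have e2 : x₀ = f * q₀ * b⁻¹ := by
        rw [eq_mul_inv_iff_mul_eq]; exact hfq₀.symm
      rw [e1, e2]; group
    rw [this]
    exact mem_conjSub (mul_mem hq (inv_mem hq₀))
  refine ⟨x * x₀⁻¹, ⟨hPmem, hQmem⟩, ?_⟩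
  refine wordDist_le S hl1 ?_ (le_trans hl3 ?_)
  · rw [hl2]; group
  · have : m (a, b) ≤ M₀ := hM₀ (Set.mem_image_of_mem m (Set.mk_mem_prod haB hbB))
    omega
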